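/- arXiv:1006.0070 — 2 statements merged into one kernel-verified Lean document; each statement's English description precedes it below -/
import Mathlib

section
/- Let μ ≤ 0, f, f̄ : ℝ⁶ → ℝ≥0 be equimeasurable integrable functions, and let e : ℝ⁶ → ℝ be measurable such that f̄ = G ∘ e for some nonincreasing function G, and such that e·f and e·f̄ are integrable. Then ∫ e(x,v)(f̄(x,v) − f(x,v)) dxdv ≤ 0. -/
open Real Set MeasureTheory

section Aux

open scoped ENNReal

variable {α : Type*} [MeasurableSpace α] {μ : Measure α}

private lemma bathtub_prod_integrable [SigmaFinite μ]
    {e h : α → ℝ} (he : Measurable e) (hh : Measurable h) (hnn : ∀ z, 0 ≤ h z)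
    (heh : Integrable (fun z => e z * h z) μ) :
    Integrable (fun p : α × ℝ => if p.2 < h p.1 then e p.1 else 0)
      (μ.prod (volume.restrict (Ioi (0:ℝ)))) := by
  have hgmeas : Measurable (fun p : α × ℝ => if p.2 < h p.1 then e p.1 else 0) :=
    Measurable.ite (measurableSet_lt measurable_snd (hh.comp measurable_fst))
      (he.comp measurable_fst) measurable_const
  refine ⟨hgmeas.aestronglyMeasurable, ?_⟩
  have hcalc : (∫⁻ (p : α × ℝ), (‖(if p.2 < h p.1 then e p.1 else 0)‖₊ : ℝ≥0∞)
      ∂(μ.prod (volume.restrict (Ioi (0:ℝ)))))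
      = ∫⁻ z, (‖e z * h z‖₊ : ℝ≥0∞) ∂μ := by
    rw [lintegral_prod _ hgmeas.nnnorm.coe_nnreal_ennreal.aemeasurable]
    refine lintegral_congr fun z => ?_
    have hrw : ∀ lam : ℝ, (‖(if lam < h z then e z else 0)‖₊ : ℝ≥0∞)
        = (Iio (h z)).indicator (fun _ => (‖e z‖₊ : ℝ≥0∞)) lam := by
      intro lam
      by_cases hl : lam < h z <;> simp [hl, Set.indicator_apply]
    simp_rw [hrw]
    rw [lintegral_indicator measurableSet_Iio, setLIntegral_const,
      Measure.restrict_apply measurableSet_Iio, Iio_inter_Ioi, Real.volume_Ioo,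
      sub_zero, nnnorm_mul, ENNReal.coe_mul, ← enorm_eq_nnnorm (h z), Real.enorm_eq_ofReal (hnn z)]
  show (∫⁻ (p : α × ℝ), (‖(if p.2 < h p.1 then e p.1 else 0)‖₊ : ℝ≥0∞)
      ∂(μ.prod (volume.restrict (Ioi (0:ℝ))))) < ⊤
  rw [hcalc]
  exact heh.2

private lemma bathtub_layercake [SigmaFinite μ]
    {e h : α → ℝ} (he : Measurable e) (hh : Measurable h) (hnn : ∀ z, 0 ≤ h z)
    (heh : Integrable (fun z => e z * h z) μ) :
    ∫ z, e z * h z ∂μ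
      = ∫ lam in Ioi (0:ℝ), (∫ z, (if lam < h z then e z else 0) ∂μ) := by
  have hint := bathtub_prod_integrable he hh hnn heh
  have hint' : Integrable
      (Function.uncurry fun z lam => if lam < h z then e z else 0)
      (μ.prod (volume.restrict (Ioi (0:ℝ)))) := hint
  have hswap := integral_integral_swap hint'
  rw [← hswap]
  have inner : ∀ z, (∫ lam in Ioi (0:ℝ), (if lam < h z then e z else 0)) = e z * h z := by
    intro z
    have hrw : ∀ lam : ℝ, (if lam < h z then e z else 0)
        = (Iio (h z)).indicator (fun _ => e z) lam := by
      intro lam; by_cases hl : lam < h z <;> simp [hl]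
    simp_rw [hrw]
    rw [integral_indicator measurableSet_Iio, setIntegral_const, measureReal_def,
      Measure.restrict_apply measurableSet_Iio, Iio_inter_Ioi, Real.volume_Ioo, sub_zero,
      ENNReal.toReal_ofReal (hnn z), smul_eq_mul, mul_comm]
  simp_rw [inner]

private lemma bathtub_slice
    {e f fbar : α → ℝ} {G : ℝ → ℝ} {lam : ℝ} (hlam : 0 < lam)
    (he : Measurable e) (hf : Measurable f)
    (hfint : Integrable f μ)
    (hG : Antitone G) (hbar : ∀ z, fbar z = G (e z))
    (hequi : μ {z | lam < f z} = μ {z | lam < fbar z})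
    (hef : Integrable (fun z => e z * f z) μ)
    (hefbar : Integrable (fun z => e z * fbar z) μ) :
    (∫ z, (if lam < fbar z then e z else 0) ∂μ)
      ≤ ∫ z, (if lam < f z then e z else 0) ∂μ := by
  have hfbarmeas : Measurable fbar := by
    have hfb : fbar = fun z => G (e z) := funext hbar
    rw [hfb]; exact hG.measurable.comp he
  have hBmeas : MeasurableSet {z | lam < f z} := measurableSet_lt measurable_const hf
  have hAmeas : MeasurableSet {z | lam < fbar z} := measurableSet_lt measurable_const hfbarmeas
  have hBfin : μ {z | lam < f z} < ⊤ := hfint.measure_gt_lt_top hlam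
  have hAfin : μ {z | lam < fbar z} < ⊤ := hequi ▸ hBfin
  have hIA : Integrable (fun z => if lam < fbar z then e z else 0) μ := by
    refine Integrable.mono (hefbar.const_mul (1/lam))
      (Measurable.ite hAmeas he measurable_const).aestronglyMeasurable
      (ae_of_all _ fun z => ?_)
    by_cases hz : lam < fbar z
    · simp only [hz, if_true]
      rw [Real.norm_eq_abs, Real.norm_eq_abs, abs_mul, abs_mul,
        abs_of_pos (show (0:ℝ) < 1/lam by positivity), one_div, ← div_eq_inv_mul,
        le_div_iff₀ hlam]
      exact mul_le_mul_of_nonneg_left (hz.le.trans (le_abs_self _)) (abs_nonneg _)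
    · simp only [hz, if_false, norm_zero]
      positivity
  have hIB : Integrable (fun z => if lam < f z then e z else 0) μ := by
    refine Integrable.mono (hef.const_mul (1/lam))
      (Measurable.ite hBmeas he measurable_const).aestronglyMeasurable
      (ae_of_all _ fun z => ?_)
    by_cases hz : lam < f z
    · simp only [hz, if_true]
      rw [Real.norm_eq_abs, Real.norm_eq_abs, abs_mul, abs_mul,
        abs_of_pos (show (0:ℝ) < 1/lam by positivity), one_div, ← div_eq_inv_mul,
        le_div_iff₀ hlam]
      exact mul_le_mul_of_nonneg_left (hz.le.trans (le_abs_self _)) (abs_nonneg _)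
    · simp only [hz, if_false, norm_zero]
      positivity
  by_cases hS : ∃ s, lam < G s
  · obtain ⟨s0, hs0⟩ := hS
    by_cases hbdd : BddAbove {s : ℝ | lam < G s}
    · set t := sSup {s : ℝ | lam < G s} with ht
      have hSne : Set.Nonempty {s : ℝ | lam < G s} := ⟨s0, hs0⟩
      have hA : ∀ z, lam < fbar z → e z ≤ t := by
        intro z hz
        refine le_csSup hbdd ?_
        show lam < G (e z)
        rw [hbar] at hz; exact hz
      have hA' : ∀ z, ¬ lam < fbar z → t ≤ e z := by
        intro z hz
        by_contra hlt
        push_neg at hlt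
        obtain ⟨s, hs, hes⟩ := exists_lt_of_lt_csSup hSne hlt
        exact hz (by rw [hbar]; exact (show lam < G s from hs).trans_le (hG hes.le))
      have eA : (fun z => if lam < fbar z then t else 0)
          = ({z | lam < fbar z}).indicator (fun _ => t) := by
        funext z; by_cases hz : lam < fbar z <;> simp [hz]
      have eB : (fun z => if lam < f z then t else 0)
          = ({z | lam < f z}).indicator (fun _ => t) := by
        funext z; by_cases hz : lam < f z <;> simp [hz]
      have hItA : Integrable (fun z => if lam < fbar z then t else 0) μ := by
        rw [eA, integrable_indicator_iff hAmeas]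
        exact integrableOn_const hAfin.ne
      have hItB : Integrable (fun z => if lam < f z then t else 0) μ := by
        rw [eB, integrable_indicator_iff hBmeas]
        exact integrableOn_const hBfin.ne
      have hpt : ∀ z, (if lam < fbar z then e z else 0) + (if lam < f z then t else 0)
          ≤ (if lam < f z then e z else 0) + (if lam < fbar z then t else 0) := by
        intro z
        by_cases h1 : lam < fbar z
        · by_cases h2 : lam < f z
          · simp only [h1, h2, if_true, le_refl]
          · have := hA z h1
            simp only [h1, h2, if_true, if_false]
            linarith
        · by_cases h2 : lam < f z
          · have := hA' z h1
            simp only [h1, h2, if_true, if_false]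
            linarith
          · simp only [h1, h2, if_false, le_refl]
      have hmono := integral_mono (hIA.add hItB) (hIB.add hItA) hpt
      simp only [Pi.add_apply] at hmono
      rw [integral_add hIA hItB, integral_add hIB hItA] at hmono
      have hconst : (∫ z, (if lam < fbar z then t else 0) ∂μ)
          = ∫ z, (if lam < f z then t else 0) ∂μ := by
        rw [eA, eB, integral_indicator_const t hAmeas, integral_indicator_const t hBmeas,
          measureReal_def, measureReal_def, ← hequi]
      linarith
    · have hall : ∀ z, lam < fbar z := by
        intro z
        obtain ⟨s, hsS, hlt⟩ := not_bddAbove_iff.1 hbdd (e z)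
        rw [hbar]; exact (show lam < G s from hsS).trans_le (hG hlt.le)
      have hAuniv : {z | lam < fbar z} = univ := eq_univ_of_forall hall
      have h1 : μ univ = μ {z | lam < f z} := by rw [← hAuniv, ← hequi]
      have hcompl : μ ({z | lam < f z})ᶜ = 0 := by
        rw [measure_compl hBmeas hBfin.ne, ← h1, tsub_self]
      have hgeq : (fun z => if lam < f z then e z else 0)
          =ᵐ[μ] (fun z => if lam < fbar z then e z else 0) := by
        filter_upwards [measure_eq_zero_iff_ae_notMem.mp hcompl] with z hz
        have hzB : lam < f z := by
          by_contra hc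
          exact hz (by simpa using hc)
        simp [hzB, hall z]
      exact ((integral_congr_ae hgeq).symm).le
  · push_neg at hS
    have hA0 : (∫ z, (if lam < fbar z then e z else 0) ∂μ) = 0 := by
      refine integral_eq_zero_of_ae (ae_of_all _ fun z => ?_)
      exact if_neg (by rw [hbar]; exact not_lt.2 (hS (e z)))
    have hAempty : {z | lam < fbar z} = (∅ : Set α) := by
      ext z; simp [hbar z, not_lt.2 (hS (e z))]
    have hB0 : μ {z | lam < f z} = 0 := by rw [hequi, hAempty, measure_empty]
    have hBz : (∫ z, (if lam < f z then e z else 0) ∂μ) = 0 := by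
      refine integral_eq_zero_of_ae ?_
      filter_upwards [measure_eq_zero_iff_ae_notMem.mp hB0] with z hz
      have hz' : ¬ lam < f z := hz
      simp [hz']
    rw [hA0, hBz]

end Aux

/-- Bathtub principle inequality: if `f̄ = G ∘ e` is a nonincreasing function of the
microscopic energy `e`, equimeasurable with `f`, then `∫ e (f̄ - f) ≤ 0`. -/
theorem bathtub_inequality
    (f fbar : EuclideanSpace ℝ (Fin 3) × EuclideanSpace ℝ (Fin 3) → ℝ)
    (e : EuclideanSpace ℝ (Fin 3) × EuclideanSpace ℝ (Fin 3) → ℝ)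
    (G : ℝ → ℝ)
    (hemeas : Measurable e) (hfmeas : Measurable f)
    (hfnn : ∀ z, 0 ≤ f z) (hfbarnn : ∀ z, 0 ≤ fbar z)
    (hfint : Integrable f) (hfbarint : Integrable fbar)
    (hG : Antitone G) (hbar : ∀ z, fbar z = G (e z))
    (hequi : ∀ lam : ℝ, 0 < lam →
      volume {z | lam < f z} = volume {z | lam < fbar z})
    (hef : Integrable (fun z => e z * f z))
    (hefbar : Integrable (fun z => e z * fbar z)) :
    (∫ z, e z * (fbar z - f z)) ≤ 0 := by
  have hfbarmeas : Measurable fbar := by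
    have hfb : fbar = fun z => G (e z) := funext hbar
    rw [hfb]; exact hG.measurable.comp hemeas
  have key : (∫ z, e z * fbar z) ≤ ∫ z, e z * f z := by
    rw [bathtub_layercake hemeas hfmeas hfnn hef,
        bathtub_layercake hemeas hfbarmeas hfbarnn hefbar]
    refine integral_mono_ae
      (bathtub_prod_integrable hemeas hfbarmeas hfbarnn hefbar).integral_prod_right
      (bathtub_prod_integrable hemeas hfmeas hfnn hef).integral_prod_right ?_
    filter_upwards [ae_restrict_mem measurableSet_Ioi] with lam hlam
    exact bathtub_slice (mem_Ioi.mp hlam) hemeas hfmeas hfint hG hbar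
      (hequi lam (mem_Ioi.mp hlam)) hef hefbar
  have hsplit : (∫ z, e z * (fbar z - f z)) = (∫ z, e z * fbar z) - ∫ z, e z * f z := by
    simp_rw [mul_sub]
    exact integral_sub hefbar hef
  linarith
end

section
/- Let φ : (0,∞) → ℝ be defined via a radial density ρ ∈ L¹ ∩ L^{3/2}((0,∞), s²ds) by φ(r) = −(1/π) ∫₀^∞ ρ(s) g_r(s) s² ds, where g_r(s) = (1/(rs)) log|(r+s)/(r−s)|. Then for each 0 < α < 1 there is a constant C_α (independent of ρ) such that |φ(r)| ≤ C_α r^{−1−α} (‖ρ‖_{L¹(s²ds)} + ‖ρ‖_{L^{3/2}(s²ds)}) for all r > 0. -/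
open Real Set MeasureTheory

lemma absJ (r : ℝ) (hr : 0 < r) :
    ∫⁻ s in Ioc (r/2) (2*r), ENNReal.ofReal (|r - s| ^ (-(1:ℝ)/2)) ≤
      ENNReal.ofReal (4 * r ^ ((1:ℝ)/2)) := by
  have h1 : (r:ℝ)/2 ≤ r := by linarith
  have h2 : r ≤ 2*r := by linarith
  rw [← Set.Ioc_union_Ioc_eq_Ioc h1 h2,
    lintegral_union measurableSet_Ioc (Set.Ioc_disjoint_Ioc_of_le le_rfl)]
  have e1 : ∫⁻ s in Ioc (r/2) r, ENNReal.ofReal (|r - s| ^ (-(1:ℝ)/2)) ≤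
      ENNReal.ofReal (2 * r ^ ((1:ℝ)/2)) := by
    have hint : IntegrableOn (fun s => (r - s) ^ (-(1:ℝ)/2)) (Ioc (r/2) r) := by
      have := (intervalIntegral.intervalIntegrable_rpow' (a := r/2) (b := 0)
        (r := -(1:ℝ)/2) (by norm_num)).comp_sub_left r
      have h3 : r - r/2 = r/2 := by ring
      rw [h3, sub_zero, intervalIntegrable_iff_integrableOn_Ioc_of_le h1] at this
      exact this
    calc ∫⁻ s in Ioc (r/2) r, ENNReal.ofReal (|r - s| ^ (-(1:ℝ)/2))
        = ∫⁻ s in Ioc (r/2) r, ENNReal.ofReal ((r - s) ^ (-(1:ℝ)/2)) := by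
          apply setLIntegral_congr_fun_ae measurableSet_Ioc
          filter_upwards with s hs
          rw [abs_of_nonneg (by linarith [hs.2] : (0:ℝ) ≤ r - s)]
      _ = ENNReal.ofReal (∫ s in Ioc (r/2) r, (r - s) ^ (-(1:ℝ)/2)) := by
          rw [ofReal_integral_eq_lintegral_ofReal hint]
          filter_upwards [ae_restrict_mem measurableSet_Ioc] with s hs
          exact Real.rpow_nonneg (by linarith [hs.2]) _
      _ ≤ ENNReal.ofReal (2 * r ^ ((1:ℝ)/2)) := by
          rw [← intervalIntegral.integral_of_le h1]
          rw [show (fun s => (r - s) ^ (-(1:ℝ)/2)) = fun s => ((fun x => x ^ (-(1:ℝ)/2)) (r - s)) from rfl]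
          rw [intervalIntegral.integral_comp_sub_left (fun x => x ^ (-(1:ℝ)/2)) r]
          rw [integral_rpow (Or.inl (by norm_num))]
          apply ENNReal.ofReal_le_ofReal
          rw [sub_self]
          norm_num
          have h3 : r - r/2 = r/2 := by ring
          rw [h3]
          have : (r/2) ^ ((1:ℝ)/2) ≤ r ^ ((1:ℝ)/2) :=
            Real.rpow_le_rpow (by positivity) (by linarith) (by norm_num)
          linarith
  have e2 : ∫⁻ s in Ioc r (2*r), ENNReal.ofReal (|r - s| ^ (-(1:ℝ)/2)) ≤
      ENNReal.ofReal (2 * r ^ ((1:ℝ)/2)) := by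
    have hint : IntegrableOn (fun s => (s - r) ^ (-(1:ℝ)/2)) (Ioc r (2*r)) := by
      have := (intervalIntegral.intervalIntegrable_rpow' (a := 0) (b := r)
        (r := -(1:ℝ)/2) (by norm_num)).comp_sub_right r
      rw [zero_add] at this
      have h3 : r + r = 2*r := by ring
      rw [h3, intervalIntegrable_iff_integrableOn_Ioc_of_le h2] at this
      exact this
    calc ∫⁻ s in Ioc r (2*r), ENNReal.ofReal (|r - s| ^ (-(1:ℝ)/2))
        = ∫⁻ s in Ioc r (2*r), ENNReal.ofReal ((s - r) ^ (-(1:ℝ)/2)) := by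
          apply setLIntegral_congr_fun_ae measurableSet_Ioc
          filter_upwards with s hs
          rw [abs_of_nonpos (by linarith [hs.1] : r - s ≤ 0), neg_sub]
      _ = ENNReal.ofReal (∫ s in Ioc r (2*r), (s - r) ^ (-(1:ℝ)/2)) := by
          rw [ofReal_integral_eq_lintegral_ofReal hint]
          filter_upwards [ae_restrict_mem measurableSet_Ioc] with s hs
          exact Real.rpow_nonneg (by linarith [hs.1]) _
      _ ≤ ENNReal.ofReal (2 * r ^ ((1:ℝ)/2)) := by
          rw [← intervalIntegral.integral_of_le h2]
          rw [show (fun s => (s - r) ^ (-(1:ℝ)/2)) = fun s => ((fun x => x ^ (-(1:ℝ)/2)) (s - r)) from rfl]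
          rw [intervalIntegral.integral_comp_sub_right (fun x => x ^ (-(1:ℝ)/2)) r]
          rw [sub_self, integral_rpow (Or.inl (by norm_num))]
          apply ENNReal.ofReal_le_ofReal
          norm_num
          have h3 : 2*r - r = r := by ring
          rw [h3]
          linarith
  calc _ ≤ ENNReal.ofReal (2 * r ^ ((1:ℝ)/2)) + ENNReal.ofReal (2 * r ^ ((1:ℝ)/2)) :=
        add_le_add e1 e2
    _ ≤ ENNReal.ofReal (4 * r ^ ((1:ℝ)/2)) := by
        rw [← ENNReal.ofReal_add (by positivity) (by positivity)]
        apply ENNReal.ofReal_le_ofReal; ring_nf; rfl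


set_option maxHeartbeats 2000000 in
lemma kernelBound (k : ℝ) (hk : 3 < k) : ∃ D > 0, ∀ r : ℝ, 0 < r →
    ∫⁻ s in Ioi (0:ℝ), ENNReal.ofReal ((1/(r*s) * Real.log |(r+s)/(r-s)|) ^ k * s^2)
      ≤ ENNReal.ofReal (D * r ^ (3-2*k)) := by
  have hk0 : (0:ℝ) < k := by linarith
  have hk3 : (0:ℝ) < 2*k - 3 := by linarith
  refine ⟨(4:ℝ)^k/24 + 16 * Real.sqrt 3 * (4*k)^k + 4^k * (2:ℝ)^(3-2*k)/(2*k-3), by positivity, ?_⟩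
  intro r hr
  set g : ℝ → ℝ := fun s => 1/(r*s) * Real.log |(r+s)/(r-s)| with hgdef'
  have hgdef : g = fun s => 1/(r*s) * Real.log |(r+s)/(r-s)| := hgdef'
  have hgnn : ∀ s : ℝ, 0 < s → 0 ≤ g s := by
    intro s hs
    apply mul_nonneg (by positivity)
    rcases eq_or_ne s r with h | h
    · simp [h, sub_self]
    · have ht : (0:ℝ) < |r - s| := abs_pos.2 (sub_ne_zero.2 (Ne.symm h))
      have habs : |(r+s)/(r-s)| = (r+s)/|r-s| := by
        rw [abs_div, abs_of_pos (by linarith)]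
      rw [habs]
      apply Real.log_nonneg
      rw [le_div_iff₀ ht, one_mul]
      exact (abs_le.2 ⟨by linarith, by linarith⟩)
  have piece1 : ∫⁻ s in Ioc (0:ℝ) (r/2), ENNReal.ofReal (g s ^ k * s^2)
      ≤ ENNReal.ofReal ((4:ℝ)^k/24 * r ^ (3-2*k)) := by

    have hk0 : (0:ℝ) < k := by linarith
    have hpt : ∀ s ∈ Ioc (0:ℝ) (r/2), ENNReal.ofReal (g s ^ k * s^2)
        ≤ ENNReal.ofReal ((4/r^2)^k * s^2) := by
      intro s hs
      obtain ⟨hs0, hs1⟩ := hs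
      apply ENNReal.ofReal_le_ofReal
      apply mul_le_mul_of_nonneg_right _ (sq_nonneg s)
      apply Real.rpow_le_rpow (hgnn s hs0) _ hk0.le
      have hrs : 0 < r - s := by linarith
      have habs : |(r+s)/(r-s)| = (r+s)/(r-s) :=
        abs_of_pos (div_pos (by linarith) hrs)
      have hlog : Real.log ((r+s)/(r-s)) ≤ 4*s/r := by
        calc Real.log ((r+s)/(r-s)) ≤ (r+s)/(r-s) - 1 :=
              Real.log_le_sub_one_of_pos (div_pos (by linarith) hrs)
          _ = 2*s/(r-s) := by field_simp; ring
          _ ≤ 4*s/r := by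
              rw [div_le_div_iff₀ hrs hr]
              nlinarith
      rw [hgdef]
      simp only [habs]
      calc 1/(r*s) * Real.log ((r+s)/(r-s)) ≤ 1/(r*s) * (4*s/r) := by
            apply mul_le_mul_of_nonneg_left hlog (by positivity)
        _ = 4/r^2 := by field_simp
    calc ∫⁻ s in Ioc (0:ℝ) (r/2), ENNReal.ofReal (g s ^ k * s^2)
        ≤ ∫⁻ s in Ioc (0:ℝ) (r/2), ENNReal.ofReal ((4/r^2)^k * s^2) := by
          apply setLIntegral_mono _ hpt
          exact ENNReal.measurable_ofReal.comp ((measurable_const.mul (measurable_id.pow_const 2)))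
      _ = ENNReal.ofReal (∫ s in Ioc (0:ℝ) (r/2), (4/r^2)^k * s^2) := by
          rw [ofReal_integral_eq_lintegral_ofReal]
          · exact (Continuous.integrableOn_Ioc (by continuity))
          · filter_upwards with s
            positivity
      _ ≤ ENNReal.ofReal ((4:ℝ)^k/24 * r ^ (3-2*k)) := by
          apply ENNReal.ofReal_le_ofReal
          rw [MeasureTheory.integral_const_mul, ← intervalIntegral.integral_of_le (by linarith : (0:ℝ) ≤ r/2),
            integral_pow]
          apply le_of_eq
          have h2k : (0:ℝ) < r ^ (2*k) := Real.rpow_pos_of_pos hr _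
          have e1 : ((4:ℝ)/r^2)^k = 4^k / r^(2*k) := by
            rw [Real.div_rpow (by norm_num) (sq_nonneg r)]
            congr 1
            rw [← Real.rpow_natCast r 2, ← Real.rpow_mul hr.le]
            norm_num
          have e2 : r ^ (3-2*k) = r^(3:ℝ) / r^(2*k) := by
            rw [← Real.rpow_sub hr]
          have e3 : r^(3:ℝ) = r^(3:ℕ) := by
            rw [← Real.rpow_natCast r 3]; norm_num
          rw [e1, e2, e3]
          field_simp
          ring
  have piece2 : ∫⁻ s in Ioc (r/2) (2*r), ENNReal.ofReal (g s ^ k * s^2)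
      ≤ ENNReal.ofReal (16 * Real.sqrt 3 * (4*k)^k * r ^ (3-2*k)) := by

    have hk0 : (0:ℝ) < k := by linarith
    set ε : ℝ := 1/(2*k) with hεdef
    have hε0 : 0 < ε := by positivity
    set c : ℝ := (4*k)^k * (3*r)^((1:ℝ)/2) / r^(2*k) * (4*r^2) with hcdef
    have hc0 : 0 ≤ c := by positivity
    have hpt : ∀ s ∈ Ioc (r/2) (2*r), ENNReal.ofReal (g s ^ k * s^2)
        ≤ ENNReal.ofReal (c * |r - s| ^ (-(1:ℝ)/2)) := by
      intro s hs
      obtain ⟨hs1, hs2⟩ := hs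
      have hs0 : 0 < s := by linarith
      apply ENNReal.ofReal_le_ofReal
      rcases eq_or_ne s r with h | h
      · subst h
        rw [hgdef]
        simp only [sub_self, div_zero, abs_zero, Real.log_zero, mul_zero,
          Real.zero_rpow (by norm_num : -(1:ℝ)/2 ≠ 0),
          Real.zero_rpow (ne_of_gt hk0), zero_mul, mul_zero, le_refl]
      · have ht : (0:ℝ) < |r - s| := abs_pos.2 (sub_ne_zero.2 (Ne.symm h))
        set t : ℝ := |r - s| with htdef
        have habs : |(r+s)/(r-s)| = (r+s)/t := by
          rw [abs_div, abs_of_pos (by linarith : (0:ℝ) < r+s)]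
        have htle : t ≤ r + s := abs_le.2 ⟨by linarith, by linarith⟩
        have hlognn : 0 ≤ Real.log ((r+s)/t) := by
          apply Real.log_nonneg
          rw [le_div_iff₀ ht, one_mul]; exact htle
        have hloga : Real.log ((r+s)/t) ≤ Real.log (3*r/t) := by
          apply Real.log_le_log (by positivity)
          gcongr
          linarith
        have hlogb : Real.log (3*r/t) ≤ 2*k * ((3*r/t) ^ ε) := by
          have hx : (0:ℝ) < 3*r/t := by positivity
          have e : Real.log (3*r/t) = 2*k * Real.log ((3*r/t) ^ ε) := by
            rw [Real.log_rpow hx, hεdef]; field_simp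
          rw [e]
          have h1 := Real.log_le_sub_one_of_pos (Real.rpow_pos_of_pos hx ε)
          nlinarith [Real.rpow_pos_of_pos hx ε]
        have hrs : 1/(r*s) ≤ 2/r^2 := by
          rw [div_le_div_iff₀ (by positivity) (by positivity)]
          nlinarith
        have hgle : g s ≤ (4*k/r^2) * (3*r/t) ^ ε := by
          rw [hgdef]
          simp only [habs]
          calc 1/(r*s) * Real.log ((r+s)/t) ≤ (2/r^2) * (2*k * ((3*r/t) ^ ε)) := by
                apply mul_le_mul hrs (hloga.trans hlogb) hlognn (by positivity)
            _ = (4*k/r^2) * (3*r/t) ^ ε := by ring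
        have hmain : g s ^ k * s^2 ≤ ((4*k/r^2) * (3*r/t) ^ ε)^k * (4*r^2) := by
          apply mul_le_mul
          · exact Real.rpow_le_rpow (hgnn s hs0) hgle hk0.le
          · nlinarith
          · exact sq_nonneg s
          · positivity
        refine hmain.trans (le_of_eq ?_)
        have e1 : ((4*k/r^2) * (3*r/t) ^ ε)^k = (4*k/r^2)^k * (3*r/t)^((1:ℝ)/2) := by
          rw [Real.mul_rpow (by positivity) (by positivity)]
          congr 1
          rw [← Real.rpow_mul (by positivity : (0:ℝ) ≤ 3*r/t)]
          congr 1
          rw [hεdef]; field_simp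
        rw [e1, hcdef]
        rw [Real.div_rpow (by positivity : (0:ℝ) ≤ 4*k) (sq_nonneg r),
          show ((r:ℝ)^(2:ℕ)) = r^(2:ℝ) by rw [← Real.rpow_natCast r 2]; norm_num,
          ← Real.rpow_mul hr.le,
          Real.div_rpow (by positivity : (0:ℝ) ≤ 3*r) (abs_nonneg _),
          show (-(1:ℝ)/2) = -((1:ℝ)/2) by norm_num,
          Real.rpow_neg (abs_nonneg (r - s))]
        have ht2 : (0:ℝ) < |r - s| ^ ((1:ℝ)/2) := Real.rpow_pos_of_pos ht _
        have hr2k : (0:ℝ) < r ^ ((2:ℝ)*k) := Real.rpow_pos_of_pos hr _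
        field_simp
    calc ∫⁻ s in Ioc (r/2) (2*r), ENNReal.ofReal (g s ^ k * s^2)
        ≤ ∫⁻ s in Ioc (r/2) (2*r), ENNReal.ofReal (c * |r - s| ^ (-(1:ℝ)/2)) := by
          apply setLIntegral_mono _ hpt
          exact ENNReal.measurable_ofReal.comp ((Measurable.pow
            ((measurable_const.sub measurable_id).abs) measurable_const).const_mul c)
      _ = ENNReal.ofReal c * ∫⁻ s in Ioc (r/2) (2*r), ENNReal.ofReal (|r - s| ^ (-(1:ℝ)/2)) := by
          simp_rw [ENNReal.ofReal_mul hc0]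
          rw [lintegral_const_mul' _ _ ENNReal.ofReal_ne_top]
      _ ≤ ENNReal.ofReal c * ENNReal.ofReal (4 * r ^ ((1:ℝ)/2)) :=
          mul_le_mul_right (absJ r hr) _
      _ = ENNReal.ofReal (c * (4 * r ^ ((1:ℝ)/2))) := (ENNReal.ofReal_mul hc0).symm
      _ ≤ ENNReal.ofReal (16 * Real.sqrt 3 * (4*k)^k * r ^ (3-2*k)) := by
          apply ENNReal.ofReal_le_ofReal
          apply le_of_eq
          rw [hcdef, Real.mul_rpow (by norm_num : (0:ℝ) ≤ 3) hr.le, Real.sqrt_eq_rpow,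
            Real.rpow_sub hr,
            show ((r:ℝ)^(2:ℕ)) = r^(2:ℝ) by rw [← Real.rpow_natCast r 2]; norm_num,
            show (r:ℝ)^(3:ℝ) = r^(2:ℝ) * (r^((1:ℝ)/2) * r^((1:ℝ)/2)) by
              rw [← Real.rpow_add hr, ← Real.rpow_add hr]; norm_num]
          have hr2k : (0:ℝ) < r ^ (2*k) := Real.rpow_pos_of_pos hr _
          field_simp
          ring
  have piece3 : ∫⁻ s in Ioi (2*r), ENNReal.ofReal (g s ^ k * s^2)
      ≤ ENNReal.ofReal ((4:ℝ)^k * (2:ℝ)^(3-2*k)/(2*k-3) * r ^ (3-2*k)) := by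

    have hk0 : (0:ℝ) < k := by linarith
    have hexp : (2:ℝ) - 2*k < -1 := by linarith
    have hpt : ∀ s ∈ Ioi (2*r), ENNReal.ofReal (g s ^ k * s^2)
        ≤ ENNReal.ofReal ((4:ℝ)^k * s ^ (2-2*k)) := by
      intro s hs
      simp only [mem_Ioi] at hs
      have hs0 : 0 < s := by linarith
      apply ENNReal.ofReal_le_ofReal
      have hsr : 0 < s - r := by linarith
      have hgle : g s ≤ 4/s^2 := by
        have habs : |(r+s)/(r-s)| = (r+s)/(s-r) := by
          rw [abs_div, abs_of_pos (by linarith : (0:ℝ) < r+s),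
            abs_of_neg (by linarith : r - s < 0), neg_sub]
        have hlog : Real.log ((r+s)/(s-r)) ≤ 4*r/s := by
          calc Real.log ((r+s)/(s-r)) ≤ (r+s)/(s-r) - 1 :=
                Real.log_le_sub_one_of_pos (div_pos (by linarith) hsr)
            _ = 2*r/(s-r) := by field_simp; ring
            _ ≤ 4*r/s := by
                rw [div_le_div_iff₀ hsr hs0]
                nlinarith
        rw [hgdef]
        simp only [habs]
        calc 1/(r*s) * Real.log ((r+s)/(s-r)) ≤ 1/(r*s) * (4*r/s) := by
              apply mul_le_mul_of_nonneg_left hlog (by positivity)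
          _ = 4/s^2 := by field_simp
      calc g s ^ k * s^2 ≤ (4/s^2)^k * s^2 := by
            apply mul_le_mul_of_nonneg_right _ (sq_nonneg s)
            exact Real.rpow_le_rpow (hgnn s hs0) hgle hk0.le
        _ = (4:ℝ)^k * s ^ (2-2*k) := by
            rw [Real.div_rpow (by norm_num) (sq_nonneg s),
              show ((s:ℝ)^2) = s ^ (2:ℝ) by rw [← Real.rpow_natCast s 2]; norm_num,
              ← Real.rpow_mul hs0.le, Real.rpow_sub hs0]
            ring
    calc ∫⁻ s in Ioi (2*r), ENNReal.ofReal (g s ^ k * s^2)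
        ≤ ∫⁻ s in Ioi (2*r), ENNReal.ofReal ((4:ℝ)^k * s ^ (2-2*k)) := by
          apply setLIntegral_mono _ hpt
          exact ENNReal.measurable_ofReal.comp (by measurability)
      _ = ENNReal.ofReal (∫ s in Ioi (2*r), (4:ℝ)^k * s ^ (2-2*k)) := by
          rw [ofReal_integral_eq_lintegral_ofReal]
          · exact (integrableOn_Ioi_rpow_of_lt hexp (by positivity)).const_mul _
          · filter_upwards [ae_restrict_mem measurableSet_Ioi] with s hs
            have hs0 : (0:ℝ) < s := by simp only [mem_Ioi] at hs; linarith
            positivity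
      _ ≤ ENNReal.ofReal ((4:ℝ)^k * (2:ℝ)^(3-2*k)/(2*k-3) * r ^ (3-2*k)) := by
          apply ENNReal.ofReal_le_ofReal
          rw [MeasureTheory.integral_const_mul, integral_Ioi_rpow_of_lt hexp (by positivity)]
          apply le_of_eq
          have h1 : ((2:ℝ)*r) ^ ((2:ℝ) - 2*k + 1) = (2:ℝ)^(3-2*k) * r^(3-2*k) := by
            rw [Real.mul_rpow (by norm_num) hr.le,
              show (2:ℝ) - 2*k + 1 = 3 - 2*k by ring]
          rw [h1, show (2:ℝ)-2*k+1 = -(2*k-3) by ring, div_neg]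
          ring
  have hsplit : Ioi (0:ℝ) = (Ioc (0:ℝ) (r/2) ∪ Ioc (r/2) (2*r)) ∪ Ioi (2*r) := by
    rw [Set.Ioc_union_Ioc_eq_Ioc (by linarith) (by linarith),
      Set.Ioc_union_Ioi_eq_Ioi (by linarith)]
  calc ∫⁻ s in Ioi (0:ℝ), ENNReal.ofReal (g s ^ k * s^2)
      = (∫⁻ s in Ioc (0:ℝ) (r/2), ENNReal.ofReal (g s ^ k * s^2))
        + (∫⁻ s in Ioc (r/2) (2*r), ENNReal.ofReal (g s ^ k * s^2))
        + (∫⁻ s in Ioi (2*r), ENNReal.ofReal (g s ^ k * s^2)) := by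
        rw [hsplit, lintegral_union measurableSet_Ioi, lintegral_union measurableSet_Ioc]
        · exact Set.Ioc_disjoint_Ioc_of_le le_rfl
        · rw [Set.Ioc_union_Ioc_eq_Ioc (by linarith) (by linarith)]
          exact Set.Ioc_disjoint_Ioi_same
    _ ≤ ENNReal.ofReal ((4:ℝ)^k/24 * r ^ (3-2*k))
        + ENNReal.ofReal (16 * Real.sqrt 3 * (4*k)^k * r ^ (3-2*k))
        + ENNReal.ofReal ((4:ℝ)^k * (2:ℝ)^(3-2*k)/(2*k-3) * r ^ (3-2*k)) :=
        add_le_add (add_le_add piece1 piece2) piece3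
    _ ≤ ENNReal.ofReal (((4:ℝ)^k/24 + 16 * Real.sqrt 3 * (4*k)^k
          + 4^k * (2:ℝ)^(3-2*k)/(2*k-3)) * r ^ (3-2*k)) := by
        rw [← ENNReal.ofReal_add (by positivity) (by positivity),
          ← ENNReal.ofReal_add (by positivity) (by positivity)]
        apply ENNReal.ofReal_le_ofReal
        apply le_of_eq
        ring

lemma amgm_aux (x y α : ℝ) (hx : 0 ≤ x) (hy : 0 ≤ y) (h0 : 0 < α) (h1 : α < 1) :
    x^α * y^(1-α) ≤ x + y := by
  rcases eq_or_lt_of_le (by positivity : (0:ℝ) ≤ x + y) with h | h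
  · have hx0 : x = 0 := by linarith
    rw [hx0, Real.zero_rpow (ne_of_gt h0), zero_mul]
    linarith
  · calc x^α * y^(1-α) ≤ (x+y)^α * (x+y)^(1-α) :=
        mul_le_mul (Real.rpow_le_rpow hx (by linarith) h0.le)
          (Real.rpow_le_rpow hy (by linarith) (by linarith))
          (Real.rpow_nonneg hy _) (Real.rpow_nonneg (by positivity) _)
      _ = x + y := by
        rw [← Real.rpow_add h, show α + (1-α) = 1 by ring, Real.rpow_one]

lemma real_factor_aux (x y t α k : ℝ) (hx : 0 ≤ x) (hy : 0 ≤ y) (ht : 0 < t)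
    (hα0 : 0 < α) (hα1 : α < 1) (hk : k*(1-α) = 3) (hk0 : 0 < k) :
    x * y * t = (x*t)^α * ((x^((3:ℝ)/2)*t)^((2:ℝ)/3) * ((y^k*t)^((1:ℝ)/3)))^(1-α) := by
  rcases eq_or_lt_of_le hx with hx0 | hx0
  · simp [← hx0, Real.zero_rpow (ne_of_gt hα0)]
  rcases eq_or_lt_of_le hy with hy0 | hy0
  · simp [← hy0, Real.zero_rpow (ne_of_gt hk0),
      Real.zero_rpow (by norm_num : (1:ℝ)/3 ≠ 0),
      Real.zero_rpow (show (1-α) ≠ 0 from ne_of_gt (by linarith))]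
  · have e1 : (x*t)^α = x^α * t^α := Real.mul_rpow hx ht.le
    have e2 : (x^((3:ℝ)/2)*t)^((2:ℝ)/3) = x * t^((2:ℝ)/3) := by
      rw [Real.mul_rpow (by positivity) ht.le, ← Real.rpow_mul hx]
      norm_num
    have e3 : (y^k*t)^((1:ℝ)/3) = y^(k/3) * t^((1:ℝ)/3) := by
      rw [Real.mul_rpow (by positivity) ht.le, ← Real.rpow_mul hy,
        show k*(1/3) = k/3 by ring]
    have e4 : (x * t^((2:ℝ)/3) * (y^(k/3) * t^((1:ℝ)/3)))^(1-α)
        = x^(1-α) * y * t^(1-α) := by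
      rw [show x * t^((2:ℝ)/3) * (y^(k/3) * t^((1:ℝ)/3))
            = x * y^(k/3) * (t^((2:ℝ)/3)*t^((1:ℝ)/3)) by ring,
        ← Real.rpow_add ht, show (2:ℝ)/3+1/3 = 1 by norm_num, Real.rpow_one,
        Real.mul_rpow (by positivity) ht.le,
        Real.mul_rpow hx (by positivity), ← Real.rpow_mul hy,
        show k/3*(1-α) = 1 by field_simp; linarith, Real.rpow_one]
    rw [e1, e2, e3, e4,
      show x^α * t^α * (x^(1-α) * y * t^(1-α)) = (x^α*x^(1-α)) * y * (t^α*t^(1-α)) by ring,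
      ← Real.rpow_add hx0, ← Real.rpow_add ht, show α + (1-α) = 1 by ring,
      Real.rpow_one, Real.rpow_one]

lemma g_nonneg (r s : ℝ) (hr : 0 < r) (hs : 0 < s) :
    0 ≤ 1/(r*s) * Real.log |(r+s)/(r-s)| := by
  apply mul_nonneg (by positivity)
  rcases eq_or_ne s r with h | h
  · simp [h, sub_self]
  · have ht : (0:ℝ) < |r - s| := abs_pos.2 (sub_ne_zero.2 (Ne.symm h))
    have habs : |(r+s)/(r-s)| = (r+s)/|r-s| := by
      rw [abs_div, abs_of_pos (by linarith)]
    rw [habs]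
    apply Real.log_nonneg
    rw [le_div_iff₀ ht, one_mul]
    exact (abs_le.2 ⟨by linarith, by linarith⟩)

/-- Decay estimate for radial Manev potentials: for each `0 < α < 1` there exists
`C_α > 0` independent of the radial density `ρ ∈ L¹ ∩ L^{3/2}((0,∞), s² ds)` such that
the potential `φ(r) = -(1/π) ∫₀^∞ ρ(s) (1/(rs)) log|(r+s)/(r-s)| s² ds` satisfies
`|φ(r)| ≤ C_α r^{-1-α} (‖ρ‖_{L¹(s²ds)} + ‖ρ‖_{L^{3/2}(s²ds)})` for all `r > 0`. -/
theorem radial_manev_decay (α : ℝ) (hα0 : 0 < α) (hα1 : α < 1) :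
    ∃ C > 0, ∀ ρ : ℝ → ℝ, Measurable ρ → (∀ s, 0 ≤ ρ s) →
      IntegrableOn (fun s => ρ s * s ^ 2) (Set.Ioi 0) →
      IntegrableOn (fun s => ρ s ^ ((3:ℝ)/2) * s ^ 2) (Set.Ioi 0) →
      ∀ r : ℝ, 0 < r →
        |(-(1 / π)) * ∫ s in Set.Ioi (0:ℝ),
            ρ s * (1 / (r * s) * Real.log |(r + s) / (r - s)|) * s ^ 2|
          ≤ C * r ^ (-1 - α) *
            ((∫ s in Set.Ioi (0:ℝ), ρ s * s ^ 2)
              + (∫ s in Set.Ioi (0:ℝ), ρ s ^ ((3:ℝ)/2) * s ^ 2) ^ ((2:ℝ)/3)) := by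
  have h1α : (0:ℝ) < 1 - α := by linarith
  set k : ℝ := 3/(1-α) with hkdef
  have hk3 : (3:ℝ) < k := by
    rw [hkdef, lt_div_iff₀ h1α]; nlinarith
  have hk0 : (0:ℝ) < k := by linarith
  have hkα : k * (1-α) = 3 := by rw [hkdef]; field_simp
  obtain ⟨D, hD, hker⟩ := kernelBound k hk3
  refine ⟨D^((1:ℝ)/k), Real.rpow_pos_of_pos hD _, ?_⟩
  intro ρ hρm hρnn hInt1 hInt2 r hr
  set N1 := ∫ s in Ioi (0:ℝ), ρ s * s^2 with hN1
  set N2 := ∫ s in Ioi (0:ℝ), ρ s ^ ((3:ℝ)/2) * s^2 with hN2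
  have hN1nn : 0 ≤ N1 := setIntegral_nonneg measurableSet_Ioi
    (fun s _ => mul_nonneg (hρnn s) (sq_nonneg s))
  have hN2nn : 0 ≤ N2 := setIntegral_nonneg measurableSet_Ioi
    (fun s _ => mul_nonneg (Real.rpow_nonneg (hρnn s) _) (sq_nonneg s))
  set g : ℝ → ℝ := fun s => 1/(r*s) * Real.log |(r+s)/(r-s)| with hgdef
  have hgm : Measurable g := by
    apply Measurable.mul
    · exact measurable_const.div (measurable_const.mul measurable_id)
    · exact Real.measurable_log.comp
        (((measurable_const.add measurable_id).div
          (measurable_const.sub measurable_id)).abs)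
  set I := ∫ s in Ioi (0:ℝ), ρ s * g s * s^2 with hI
  have hInn : 0 ≤ I := setIntegral_nonneg measurableSet_Ioi
    (fun s hs => mul_nonneg (mul_nonneg (hρnn s) (g_nonneg r s hr hs)) (sq_nonneg s))
  -- reduce |−(1/π)·I| ≤ I
  have habs : |(-(1 / π)) * I| ≤ I := by
    rw [abs_mul, abs_neg, abs_of_pos (by positivity : (0:ℝ) < 1/π), abs_of_nonneg hInn]
    have h1π : 1/π ≤ 1 := by
      rw [div_le_one Real.pi_pos]; linarith [Real.pi_gt_three]
    calc 1/π * I ≤ 1 * I := mul_le_mul_of_nonneg_right h1π hInn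
      _ = I := one_mul I
  refine le_trans habs ?_
  -- ENNReal setup
  set A : ℝ → ENNReal := fun s => ENNReal.ofReal (ρ s * s^2) with hA
  set B : ℝ → ENNReal := fun s => ENNReal.ofReal (ρ s ^ ((3:ℝ)/2) * s^2) with hB
  set G : ℝ → ENNReal := fun s => ENNReal.ofReal (g s ^ k * s^2) with hG
  have hAmes : Measurable A := ENNReal.measurable_ofReal.comp
    (hρm.mul (measurable_id.pow_const 2))
  have hBmes : Measurable B := ENNReal.measurable_ofReal.comp
    ((hρm.pow_const _).mul (measurable_id.pow_const 2))
  have hGmes : Measurable G := ENNReal.measurable_ofReal.comp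
    ((hgm.pow_const _).mul (measurable_id.pow_const 2))
  -- I = toReal of lintegral
  have hIrepr : I = (∫⁻ s in Ioi (0:ℝ), ENNReal.ofReal (ρ s * g s * s^2)).toReal := by
    rw [hI]
    apply integral_eq_lintegral_of_nonneg_ae
    · filter_upwards [ae_restrict_mem measurableSet_Ioi] with s hs
      exact mul_nonneg (mul_nonneg (hρnn s) (g_nonneg r s hr hs)) (sq_nonneg s)
    · exact ((hρm.mul hgm).mul (measurable_id.pow_const 2)).aestronglyMeasurable
  -- pointwise factorization
  have hfact : ∀ s ∈ Ioi (0:ℝ), ENNReal.ofReal (ρ s * g s * s^2)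
      = (A s)^α * ((B s)^((2:ℝ)/3) * (G s)^((1:ℝ)/3))^(1-α) := by
    intro s hs
    have hs0 : (0:ℝ) < s := hs
    rw [hA, hB, hG]
    rw [ENNReal.ofReal_rpow_of_nonneg (mul_nonneg (hρnn s) (sq_nonneg s)) hα0.le,
      ENNReal.ofReal_rpow_of_nonneg
        (mul_nonneg (Real.rpow_nonneg (hρnn s) _) (sq_nonneg s)) (by norm_num),
      ENNReal.ofReal_rpow_of_nonneg
        (mul_nonneg (Real.rpow_nonneg (g_nonneg r s hr hs0) _) (sq_nonneg s)) (by norm_num),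
      ← ENNReal.ofReal_mul
        (Real.rpow_nonneg (mul_nonneg (Real.rpow_nonneg (hρnn s) _) (sq_nonneg s)) _),
      ENNReal.ofReal_rpow_of_nonneg
        (mul_nonneg (Real.rpow_nonneg (mul_nonneg (Real.rpow_nonneg (hρnn s) _) (sq_nonneg s)) _)
          (Real.rpow_nonneg (mul_nonneg (Real.rpow_nonneg (g_nonneg r s hr hs0) _) (sq_nonneg s)) _))
        h1α.le,
      ← ENNReal.ofReal_mul (Real.rpow_nonneg (mul_nonneg (hρnn s) (sq_nonneg s)) _)]
    congr 1
    exact real_factor_aux (ρ s) (g s) (s^2) α k (hρnn s) (g_nonneg r s hr hs0)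
      (by positivity) hα0 hα1 hkα hk0
  -- Hölder chain
  set H : ℝ → ENNReal := fun s => (B s)^((2:ℝ)/3) * (G s)^((1:ℝ)/3) with hH
  have holder2 : ∫⁻ s in Ioi (0:ℝ), H s
      ≤ (∫⁻ s in Ioi (0:ℝ), B s)^((2:ℝ)/3) * (∫⁻ s in Ioi (0:ℝ), G s)^((1:ℝ)/3) := by
    have hpq : ((3:ℝ)/2).HolderConjugate 3 := ⟨by norm_num, by norm_num, by norm_num⟩
    have h := ENNReal.lintegral_mul_le_Lp_mul_Lq (volume.restrict (Ioi 0)) hpq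
      (f := fun s => (B s)^((2:ℝ)/3)) (g := fun s => (G s)^((1:ℝ)/3))
      (hBmes.pow_const _).aemeasurable (hGmes.pow_const _).aemeasurable
    simp only [Pi.mul_apply, ← ENNReal.rpow_mul] at h
    norm_num at h
    exact h
  have holder1 : ∫⁻ s in Ioi (0:ℝ), ENNReal.ofReal (ρ s * g s * s^2)
      ≤ (∫⁻ s in Ioi (0:ℝ), A s)^α * (∫⁻ s in Ioi (0:ℝ), H s)^(1-α) := by
    rw [setLIntegral_congr_fun measurableSet_Ioi hfact]
    have hpq : ((1:ℝ)/α).HolderConjugate (1/(1-α)) :=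
      ⟨by rw [one_div, one_div, inv_inv, inv_inv, inv_one]; ring, one_div_pos.2 hα0, one_div_pos.2 h1α⟩
    have h := ENNReal.lintegral_mul_le_Lp_mul_Lq (volume.restrict (Ioi 0)) hpq
      (f := fun s => (A s)^α) (g := fun s => (H s)^(1-α))
      (hAmes.pow_const _).aemeasurable
      (((hBmes.pow_const _).mul (hGmes.pow_const _)).pow_const _).aemeasurable
    simp only [Pi.mul_apply, ← ENNReal.rpow_mul] at h
    rw [mul_one_div_cancel (ne_of_gt hα0), mul_one_div_cancel (ne_of_gt h1α),
      one_div_one_div, one_div_one_div] at h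
    simp only [ENNReal.rpow_one] at h
    exact h
  have hLA : ∫⁻ s in Ioi (0:ℝ), A s = ENNReal.ofReal N1 := by
    rw [hN1, ofReal_integral_eq_lintegral_ofReal hInt1
      (Filter.Eventually.of_forall (fun s => mul_nonneg (hρnn s) (sq_nonneg s)))]
  have hLB : ∫⁻ s in Ioi (0:ℝ), B s = ENNReal.ofReal N2 := by
    rw [hN2, ofReal_integral_eq_lintegral_ofReal hInt2
      (Filter.Eventually.of_forall
        (fun s => mul_nonneg (Real.rpow_nonneg (hρnn s) _) (sq_nonneg s)))]
  have hLG : ∫⁻ s in Ioi (0:ℝ), G s ≤ ENNReal.ofReal (D * r ^ (3-2*k)) := hker r hr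
  -- combine
  have hDr : (0:ℝ) ≤ D * r ^ (3-2*k) := by positivity
  have hcomb : ∫⁻ s in Ioi (0:ℝ), ENNReal.ofReal (ρ s * g s * s^2)
      ≤ ENNReal.ofReal (N1^α * ((N2^((2:ℝ)/3) * ((D * r ^ (3-2*k))^((1:ℝ)/3)))^(1-α))) := by
    refine holder1.trans ?_
    have step : (∫⁻ s in Ioi (0:ℝ), H s)^(1-α)
        ≤ ((ENNReal.ofReal N2)^((2:ℝ)/3) * (ENNReal.ofReal (D * r ^ (3-2*k)))^((1:ℝ)/3))^(1-α) := by
      apply ENNReal.rpow_le_rpow _ h1α.le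
      refine holder2.trans ?_
      rw [hLB]
      exact mul_le_mul_right (ENNReal.rpow_le_rpow hLG (by norm_num)) _
    refine le_trans (mul_le_mul_right step _) ?_
    rw [hLA]
    rw [ENNReal.ofReal_rpow_of_nonneg hN1nn hα0.le,
      ENNReal.ofReal_rpow_of_nonneg hN2nn (by norm_num),
      ENNReal.ofReal_rpow_of_nonneg hDr (by norm_num),
      ← ENNReal.ofReal_mul (Real.rpow_nonneg hN2nn _),
      ENNReal.ofReal_rpow_of_nonneg
        (mul_nonneg (Real.rpow_nonneg hN2nn _) (Real.rpow_nonneg hDr _)) h1α.le,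
      ← ENNReal.ofReal_mul (Real.rpow_nonneg hN1nn _)]
  have hItoR : I ≤ N1^α * ((N2^((2:ℝ)/3) * ((D * r ^ (3-2*k))^((1:ℝ)/3)))^(1-α)) := by
    rw [hIrepr]
    have := ENNReal.toReal_mono ENNReal.ofReal_ne_top hcomb
    rwa [ENNReal.toReal_ofReal (by positivity)] at this
  refine hItoR.trans ?_
  -- final real algebra
  have hexp1 : ((1:ℝ)/3) * (1-α) = 1/k := by
    field_simp
    nlinarith [hkα]
  have hexp2 : (3-2*k) * ((1:ℝ)/k) = -1-α := by
    field_simp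
    nlinarith [hkα]
  have key : (N2^((2:ℝ)/3) * ((D * r ^ (3-2*k))^((1:ℝ)/3)))^(1-α)
      = (N2^((2:ℝ)/3))^(1-α) * (D^((1:ℝ)/k) * r ^ (-1-α)) := by
    rw [Real.mul_rpow (Real.rpow_nonneg hN2nn _) (Real.rpow_nonneg hDr _),
      ← Real.rpow_mul hDr, hexp1,
      Real.mul_rpow hD.le (Real.rpow_nonneg hr.le _),
      ← Real.rpow_mul hr.le, hexp2]
  rw [key]
  have amgm := amgm_aux N1 (N2^((2:ℝ)/3)) α hN1nn (Real.rpow_nonneg hN2nn _) hα0 hα1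
  calc N1^α * ((N2^((2:ℝ)/3))^(1-α) * (D^((1:ℝ)/k) * r ^ (-1-α)))
      = (N1^α * (N2^((2:ℝ)/3))^(1-α)) * (D^((1:ℝ)/k) * r ^ (-1-α)) := by ring
    _ ≤ (N1 + N2^((2:ℝ)/3)) * (D^((1:ℝ)/k) * r ^ (-1-α)) := by
        apply mul_le_mul_of_nonneg_right amgm
        positivity
    _ = D^((1:ℝ)/k) * r ^ (-1-α) * (N1 + N2^((2:ℝ)/3)) := by ring
end
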